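/- Let γ_N = [[A_N, C_N],[C_Nᵀ, A_N]] be a real symmetric matrix with A_N symmetric, C_N antisymmetric, and A_N − ‖C_N‖_op·I ≥ iJ. Then γ_N ≥ L_N ⊕ L_N where L_N := A_N − ‖C_N‖_op·I is a CM; consequently γ_N satisfies the separability condition (γ_N ≥ γ_A ⊕ γ_B for CMs γ_A, γ_B). -/

import Mathlib

open Matrix
open scoped Classical ComplexOrder
set_option synthInstance.maxHeartbeats 1000000
set_option maxHeartbeats 1000000

noncomputable section

/-- Embed a real matrix into the complex matrices. -/
def toC {k l : ℕ} (A : Matrix (Fin k) (Fin l) ℝ) : Matrix (Fin k) (Fin l) ℂ :=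
  A.map Complex.ofReal

/-- The standard symplectic form `Jₙ = ⊕ₖ [[0,-1],[1,0]]` on `ℝ^{2n}`. -/
def J (n : ℕ) : Matrix (Fin (2*n)) (Fin (2*n)) ℝ :=
  Matrix.of fun i j =>
    if i.val + 1 = j.val ∧ i.val % 2 = 0 then -1
    else if j.val + 1 = i.val ∧ j.val % 2 = 0 then 1 else 0

/-- A correlation matrix (CM): a real symmetric `2n×2n` matrix with `γ - iJₙ ≥ 0`. -/
def IsCM {n : ℕ} (γ : Matrix (Fin (2*n)) (Fin (2*n)) ℝ) : Prop :=
  γ.IsSymm ∧ (toC γ - Complex.I • toC (J n)).PosSemidef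

/-- The operator norm (largest singular value) of a real matrix. -/
def opNorm {n m : ℕ} (C : Matrix (Fin n) (Fin m) ℝ) : ℝ :=
  ‖(Matrix.toEuclideanLin (𝕜 := ℝ) C).toContinuousLinearMap‖

/-- The square root of a positive semidefinite matrix, as `PosSemidef.sqrt` was defined in
Mathlib (Dec 2024). -/
def psdSqrt {k : ℕ} {𝕜 : Type*} [RCLike 𝕜] {A : Matrix (Fin k) (Fin k) 𝕜} (hA : A.PosSemidef) :
    Matrix (Fin k) (Fin k) 𝕜 :=
  hA.1.eigenvectorUnitary.1 * diagonal ((RCLike.ofReal : ℝ → 𝕜) ∘ Real.sqrt ∘ hA.1.eigenvalues) *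
    (star hA.1.eigenvectorUnitary : Matrix (Fin k) (Fin k) 𝕜)

/-- The trace norm (sum of singular values) of a real square matrix. -/
def trNorm {k : ℕ} (A : Matrix (Fin k) (Fin k) ℝ) : ℝ :=
  (psdSqrt (Matrix.posSemidef_conjTranspose_mul_self A)).trace

/-- The trace norm of a complex square matrix. -/
def trNormC {k : ℕ} (A : Matrix (Fin k) (Fin k) ℂ) : ℝ :=
  ((psdSqrt (Matrix.posSemidef_conjTranspose_mul_self A)).trace).re

/-- The Moore–Penrose pseudoinverse of a real matrix. -/
def pinvR {n m : ℕ} (A : Matrix (Fin n) (Fin m) ℝ) : Matrix (Fin m) (Fin n) ℝ :=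
  if h : ∃ B : Matrix (Fin m) (Fin n) ℝ,
      A * B * A = A ∧ B * A * B = B ∧ (A * B)ᵀ = A * B ∧ (B * A)ᵀ = B * A
  then h.choose else 0

/-- The Moore–Penrose pseudoinverse of a complex matrix. -/
def pinvC {n m : ℕ} (A : Matrix (Fin n) (Fin m) ℂ) : Matrix (Fin m) (Fin n) ℂ :=
  if h : ∃ B : Matrix (Fin m) (Fin n) ℂ,
      A * B * A = A ∧ B * A * B = B ∧ (A * B)ᴴ = A * B ∧ (B * A)ᴴ = B * A
  then h.choose else 0

/-- Real part of a complex matrix. -/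
def reM {k l : ℕ} (X : Matrix (Fin k) (Fin l) ℂ) : Matrix (Fin k) (Fin l) ℝ :=
  Matrix.of fun i j => (X i j).re

/-- Imaginary part of a complex matrix. -/
def imM {k l : ℕ} (X : Matrix (Fin k) (Fin l) ℂ) : Matrix (Fin k) (Fin l) ℝ :=
  Matrix.of fun i j => (X i j).im


lemma dot_bound {k : ℕ} (C : Matrix (Fin k) (Fin k) ℝ) (x y : Fin k → ℝ) :
    |x ⬝ᵥ (C *ᵥ y)| ≤ opNorm C *
      (‖(WithLp.equiv 2 (Fin k → ℝ)).symm x‖ * ‖(WithLp.equiv 2 (Fin k → ℝ)).symm y‖) := by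
  set u := (WithLp.equiv 2 (Fin k → ℝ)).symm x
  set v := (WithLp.equiv 2 (Fin k → ℝ)).symm y
  have h1 : x ⬝ᵥ (C *ᵥ y) = (inner ℝ u ((Matrix.toEuclideanLin (𝕜 := ℝ) C) v) : ℝ) := by
    rw [EuclideanSpace.inner_eq_star_dotProduct]
    simp [Matrix.toEuclideanLin_apply, u, v, Pi.star_def, dotProduct_comm]
  rw [h1]
  calc |(inner ℝ u ((Matrix.toEuclideanLin (𝕜 := ℝ) C) v) : ℝ)|
      ≤ ‖u‖ * ‖(Matrix.toEuclideanLin (𝕜 := ℝ) C) v‖ := abs_real_inner_le_norm _ _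
    _ ≤ ‖u‖ * (opNorm C * ‖v‖) := by
        refine mul_le_mul_of_nonneg_left ?_ (norm_nonneg _)
        have := (Matrix.toEuclideanLin (𝕜 := ℝ) C).toContinuousLinearMap.le_opNorm v
        simpa [opNorm] using this
    _ = opNorm C * (‖u‖ * ‖v‖) := by ring

lemma block_psd {k : ℕ} (C : Matrix (Fin k) (Fin k) ℝ) :
    (Matrix.fromBlocks (opNorm C • 1) C Cᵀ (opNorm C • (1 : Matrix (Fin k) (Fin k) ℝ))).PosSemidef := by
  set c := opNorm C with hc
  have hc0 : 0 ≤ c := norm_nonneg _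
  refine Matrix.PosSemidef.of_dotProduct_mulVec_nonneg ?_ ?_
  · unfold Matrix.IsHermitian
    rw [Matrix.conjTranspose_eq_transpose_of_trivial, Matrix.fromBlocks_transpose]
    simp [Matrix.transpose_smul]
  · intro x
    have hx : x = (x ∘ Sum.inl) ⊕ᵥ (x ∘ Sum.inr) := (Sum.elim_comp_inl_inr x).symm
    set x₁ := x ∘ Sum.inl
    set x₂ := x ∘ Sum.inr
    set u := (WithLp.equiv 2 (Fin k → ℝ)).symm x₁
    set v := (WithLp.equiv 2 (Fin k → ℝ)).symm x₂
    have hform : star x ⬝ᵥ (Matrix.fromBlocks (c • 1) C Cᵀ (c • 1) *ᵥ x) =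
        c * (x₁ ⬝ᵥ x₁) + x₁ ⬝ᵥ (C *ᵥ x₂) + (x₂ ⬝ᵥ (Cᵀ *ᵥ x₁) + c * (x₂ ⬝ᵥ x₂)) := by
      rw [show (star x : Fin k ⊕ Fin k → ℝ) = x from funext fun i => star_trivial _]
      nth_rewrite 1 [hx]
      rw [Matrix.fromBlocks_mulVec, sumElim_dotProduct_sumElim]
      simp only [Matrix.smul_mulVec, Matrix.one_mulVec, dotProduct_add,
        dotProduct_smul, smul_eq_mul]
      rfl
    have hsym : x₂ ⬝ᵥ (Cᵀ *ᵥ x₁) = x₁ ⬝ᵥ (C *ᵥ x₂) := by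
      rw [Matrix.dotProduct_mulVec, Matrix.vecMul_transpose, dotProduct_comm]
    have h1 : x₁ ⬝ᵥ x₁ = ‖u‖ ^ 2 := by
      have : (inner ℝ u u : ℝ) = x₁ ⬝ᵥ x₁ := by
        rw [EuclideanSpace.inner_eq_star_dotProduct]
        simp [u, Pi.star_def]
      rw [← this, real_inner_self_eq_norm_sq]
    have h2 : x₂ ⬝ᵥ x₂ = ‖v‖ ^ 2 := by
      have : (inner ℝ v v : ℝ) = x₂ ⬝ᵥ x₂ := by
        rw [EuclideanSpace.inner_eq_star_dotProduct]
        simp [v, Pi.star_def]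
      rw [← this, real_inner_self_eq_norm_sq]
    have hb := dot_bound C x₁ x₂
    rw [hform, hsym, h1, h2]
    have habs : -(c * (‖u‖ * ‖v‖)) ≤ x₁ ⬝ᵥ (C *ᵥ x₂) := neg_le_of_abs_le hb
    nlinarith [sq_nonneg (‖u‖ - ‖v‖), norm_nonneg u, norm_nonneg v]

/-- if `L_N = A_N − ‖C_N‖_op·I ≥ iJ`, then `γ_N ≥ L_N ⊕ L_N` with `L_N`
a CM; consequently `γ_N` satisfies the separability condition. -/
theorem LN_separable {n : ℕ} (A C : Matrix (Fin (2*n)) (Fin (2*n)) ℝ)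
    (hA : A.IsSymm) (hC : Cᵀ = -C)
    (hL : (toC (A - opNorm C • 1) - Complex.I • toC (J n)).PosSemidef) :
    IsCM (A - opNorm C • 1) ∧
    (Matrix.fromBlocks A C Cᵀ A -
      Matrix.fromBlocks (A - opNorm C • 1) 0 0 (A - opNorm C • 1)).PosSemidef ∧
    ∃ γA γB : Matrix (Fin (2*n)) (Fin (2*n)) ℝ, IsCM γA ∧ IsCM γB ∧
      (Matrix.fromBlocks A C Cᵀ A - Matrix.fromBlocks γA 0 0 γB).PosSemidef := by
  have hLsymm : (A - opNorm C • 1).IsSymm := by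
    unfold Matrix.IsSymm
    rw [Matrix.transpose_sub, Matrix.transpose_smul, Matrix.transpose_one, hA.eq]
  have hCM : IsCM (A - opNorm C • 1) := ⟨hLsymm, hL⟩
  have hdiff : Matrix.fromBlocks A C Cᵀ A -
      Matrix.fromBlocks (A - opNorm C • 1) 0 0 (A - opNorm C • 1) =
      Matrix.fromBlocks (opNorm C • 1) C Cᵀ (opNorm C • 1) := by
    ext (i | i) (j | j) <;>
      simp [Matrix.fromBlocks, Matrix.sub_apply, Matrix.smul_apply, sub_sub_cancel]
  have hpsd : (Matrix.fromBlocks A C Cᵀ A -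
      Matrix.fromBlocks (A - opNorm C • 1) 0 0 (A - opNorm C • 1)).PosSemidef := by
    rw [hdiff]; exact block_psd C
  exact ⟨hCM, hpsd, A - opNorm C • 1, A - opNorm C • 1, hCM, hCM, hpsd⟩
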